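/- Fix positive integers s₁, s₂ and an integer i with 1 ≤ i ≤ s₁s₂. For a finitely supported I : ℤ×ℤ → ℝ define the i-th min-max convolution eigenvalue σᵢ(I) as the infimum, over all families (Y_j)_{j=1,…,i−1} of functions supported in the s₁×s₂ grid, of the supremum of ‖I⊗X‖_F over all X supported in the s₁×s₂ grid with ‖X‖_F = 1 and ⟨X, Y_j⟩ = 0 for all j = 1,…,i−1. Then for every kernel K in the simplex S and every finitely supported I, one has σᵢ(I⊗K) ≤ σᵢ(I). -/

import Mathlib

/-- Images, kernels, and filters: finitely supported functions `ℤ × ℤ → ℝ`. -/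
abbrev Img := (ℤ × ℤ) →₀ ℝ

/-- Discrete 2D convolution: `(X ⊗ Y)(i,j) = ∑_{(u,v)} X((i,j)-(u,v)) * Y(u,v)`. -/
noncomputable def conv (X Y : Img) : Img :=
  X.sum fun a xa => Y.sum fun b yb => Finsupp.single (a + b) (xa * yb)

/-- Frobenius norm `‖X‖_F = √(∑ X(i,j)²)`. -/
noncomputable def frob (X : Img) : ℝ := Real.sqrt (X.sum fun _ c => c ^ 2)

/-- Inner product `⟨X, Y⟩ = ∑ X(i,j) * Y(i,j)`. -/
noncomputable def inner2 (X Y : Img) : ℝ := X.sum fun p c => c * Y p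

/-- ℓ¹ norm `‖X‖₁ = ∑ |X(i,j)|`. -/
noncomputable def l1 (X : Img) : ℝ := X.sum fun _ c => |c|

/-- The simplex `S` of blur kernels: nonnegative entries summing to one. -/
def InSimplex (K : Img) : Prop := (∀ p, 0 ≤ K p) ∧ (K.sum fun _ c => c) = 1

/-- `X` is supported in the `a × b` grid `{0,…,a-1} × {0,…,b-1}`. -/
def SuppIn (a b : ℕ) (X : Img) : Prop :=
  ∀ p : ℤ × ℤ, ¬(0 ≤ p.1 ∧ p.1 < (a : ℤ) ∧ 0 ≤ p.2 ∧ p.2 < (b : ℤ)) → X p = 0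

/-- The `i`-th min-max convolution eigenvalue of `I`, with sampling sizes `s₁, s₂`. -/
noncomputable def sigmaEig (s₁ s₂ i : ℕ) (I : Img) : ℝ :=
  sInf { r : ℝ | ∃ Y : Fin (i - 1) → Img, (∀ j, SuppIn s₁ s₂ (Y j)) ∧
    r = sSup { t : ℝ | ∃ X : Img, SuppIn s₁ s₂ X ∧ frob X = 1 ∧
      (∀ j, inner2 X (Y j) = 0) ∧ t = frob (conv I X) } }

/-! ### Auxiliary lemmas -/

lemma conv_eq_mul (X Y : AddMonoidAlgebra ℝ (ℤ × ℤ)) : conv X.coeff Y.coeff = (X * Y).coeff := by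
  rw [AddMonoidAlgebra.mul_def]
  simp [conv, Finsupp.sum, AddMonoidAlgebra.coeff_sum, AddMonoidAlgebra.coeff_single]

lemma frob_nonneg (X : Img) : 0 ≤ frob X := Real.sqrt_nonneg _

lemma frob_zero : frob 0 = 0 := by simp [frob]

noncomputable def toE (s : Finset (ℤ × ℤ)) (X : Img) : EuclideanSpace ℝ s := WithLp.toLp 2 (fun p : s => X p.1)

lemma frob_eq_norm (s : Finset (ℤ × ℤ)) (X : Img) (h : X.support ⊆ s) :
    frob X = ‖toE s X‖ := by
  rw [EuclideanSpace.norm_eq, frob, Finsupp.sum_of_support_subset X h _ (by simp)]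
  congr 1
  rw [← Finset.sum_coe_sort s (fun p => X p ^ 2)]
  simp [toE, Real.norm_eq_abs, sq_abs]

lemma frob_add_le (X Y : Img) : frob (X + Y) ≤ frob X + frob Y := by
  classical
  set s := X.support ∪ Y.support with hs
  have hX : X.support ⊆ s := Finset.subset_union_left
  have hY : Y.support ⊆ s := Finset.subset_union_right
  have hXY : (X + Y).support ⊆ s := Finsupp.support_add
  rw [frob_eq_norm s _ hXY, frob_eq_norm s X hX, frob_eq_norm s Y hY]
  have h : toE s (X + Y) = toE s X + toE s Y := by
    ext p
    simp [toE]
  rw [h]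
  exact norm_add_le _ _

lemma frob_smul (c : ℝ) (X : Img) : frob (c • X) = |c| * frob X := by
  rw [frob, frob, Finsupp.sum_of_support_subset (c • X) Finsupp.support_smul _ (by simp)]
  simp only [Finsupp.smul_apply, smul_eq_mul, mul_pow]
  rw [← Finset.mul_sum, Real.sqrt_mul (sq_nonneg c), Real.sqrt_sq_eq_abs]
  rfl

lemma frob_sum_le {ι : Type*} (s : Finset ι) (f : ι → Img) :
    frob (∑ a ∈ s, f a) ≤ ∑ a ∈ s, frob (f a) := by
  classical
  induction s using Finset.induction with
  | empty => simp [frob_zero]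
  | insert _ _ h ih =>
    rw [Finset.sum_insert h, Finset.sum_insert h]
    exact le_trans (frob_add_le _ _) (by linarith)

lemma frob_mapDomain (a : ℤ × ℤ) (Z : Img) :
    frob (Finsupp.mapDomain (fun x => a + x) Z) = frob Z := by
  have hinj : Function.Injective (fun x : ℤ × ℤ => a + x) := add_right_injective a
  rw [frob, Finsupp.sum_mapDomain_index_inj hinj, frob]

lemma conv_eq_sum_shift (A Z : Img) :
    conv A Z = ∑ a ∈ A.support, A a • Finsupp.mapDomain (fun x => a + x) Z := by
  rw [conv, Finsupp.sum]
  refine Finset.sum_congr rfl fun a _ => ?_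
  rw [Finsupp.mapDomain, Finsupp.smul_sum]
  exact Finsupp.sum_congr fun b _ => by rw [Finsupp.smul_single]; rfl

lemma frob_conv_le (A Z : Img) : frob (conv A Z) ≤ l1 A * frob Z := by
  rw [conv_eq_sum_shift, l1, Finsupp.sum, Finset.sum_mul]
  refine le_trans (frob_sum_le _ _) (Finset.sum_le_sum fun a _ => ?_)
  rw [frob_smul, frob_mapDomain]

lemma l1_eq_one {K : Img} (hK : InSimplex K) : l1 K = 1 := by
  rw [l1, ← hK.2]
  exact Finsupp.sum_congr fun p _ => abs_of_nonneg (hK.1 p)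

lemma frob_conv_conv_le (I K X : Img) (hK : InSimplex K) :
    frob (conv (conv I K) X) ≤ frob (conv I X) := by
  have h1 : conv (conv I K) X = conv K (conv I X) := by
    have e : ∀ A B : Img, conv A B = (AddMonoidAlgebra.ofCoeff A * AddMonoidAlgebra.ofCoeff B).coeff :=
      fun A B => conv_eq_mul (AddMonoidAlgebra.ofCoeff A) (AddMonoidAlgebra.ofCoeff B)
    simp only [e, AddMonoidAlgebra.ofCoeff_coeff]
    congr 1
    ring
  rw [h1]
  calc frob (conv K (conv I X)) ≤ l1 K * frob (conv I X) := frob_conv_le _ _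
    _ = frob (conv I X) := by rw [l1_eq_one hK, one_mul]

/-- Blurring by a simplex kernel does not increase the convolution eigenvalues. -/
theorem sigmaEig_conv_le (s₁ s₂ : ℕ) (hs₁ : 0 < s₁) (hs₂ : 0 < s₂)
    (i : ℕ) (hi₁ : 1 ≤ i) (hi₂ : i ≤ s₁ * s₂)
    (I K : Img) (hK : InSimplex K) :
    sigmaEig s₁ s₂ i (conv I K) ≤ sigmaEig s₁ s₂ i I := by
  classical
  unfold sigmaEig
  -- the outer set for `conv I K` is bounded below by 0
  have hbdd : BddBelow { r : ℝ | ∃ Y : Fin (i - 1) → Img, (∀ j, SuppIn s₁ s₂ (Y j)) ∧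
      r = sSup { t : ℝ | ∃ X : Img, SuppIn s₁ s₂ X ∧ frob X = 1 ∧
        (∀ j, inner2 X (Y j) = 0) ∧ t = frob (conv (conv I K) X) } } := by
    refine ⟨0, ?_⟩
    rintro r ⟨Y, hY, rfl⟩
    exact Real.sSup_nonneg (by rintro t ⟨X, -, -, -, rfl⟩; exact frob_nonneg _)
  -- the outer set for `I` is nonempty (take all Y's to be 0)
  refine le_csInf ⟨_, fun _ => 0, fun j p _ => rfl, rfl⟩ ?_
  rintro r ⟨Y, hY, rfl⟩
  refine csInf_le_of_le hbdd ⟨Y, hY, rfl⟩ ?_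
  -- bounded above: the inner set for I with family Y
  have hT : BddAbove { t : ℝ | ∃ X : Img, SuppIn s₁ s₂ X ∧ frob X = 1 ∧
      (∀ j, inner2 X (Y j) = 0) ∧ t = frob (conv I X) } := by
    refine ⟨l1 I, ?_⟩
    rintro t ⟨X, -, hfX, -, rfl⟩
    calc frob (conv I X) ≤ l1 I * frob X := frob_conv_le _ _
      _ = l1 I := by rw [hfX, mul_one]
  by_cases hne : { t : ℝ | ∃ X : Img, SuppIn s₁ s₂ X ∧ frob X = 1 ∧
      (∀ j, inner2 X (Y j) = 0) ∧ t = frob (conv (conv I K) X) }.Nonempty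
  · refine csSup_le hne ?_
    rintro t ⟨X, hsX, hfX, hoX, rfl⟩
    exact le_trans (frob_conv_conv_le I K X hK)
      (le_csSup hT ⟨X, hsX, hfX, hoX, rfl⟩)
  · rw [Set.not_nonempty_iff_eq_empty.mp hne, Real.sSup_empty]
    exact Real.sSup_nonneg (by rintro t ⟨X, -, -, -, rfl⟩; exact frob_nonneg _)
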